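/- Let α ∈ (0,2] and let λ > 0, ν > 0 and μ ≥ 0 be real numbers. Then the convergence radii satisfy R(λ,μ,ν) ≤ R(λ,0,ν) ≤ C_α · (Γ(α+1)/(λν))^{1/(2α)}, where C_α = (3·5^{α−1})^{1/(2α)} · √α if α ∈ (0,1], and C_α = √(2α) / (B(α,α) − 2^{1−2α}) if α ∈ (1,2]. -/

import Mathlib

open MeasureTheory Finset

/-- The Euler Beta function `B(a,b) = ∫₀¹ u^(a-1) (1-u)^(b-1) du`. -/
noncomputable def Beta (a b : ℝ) : ℝ :=
  ∫ u in Set.Ioo (0:ℝ) 1, u ^ (a - 1) * (1 - u) ^ (b - 1)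

/-- The sequence `(a_k)` solving `(A_{λ,μ,ν})`. -/
def IsRiccatiSeq (α : ℝ) (l m n : ℂ) (a : ℕ → ℂ) : Prop :=
  a 0 = 0 ∧ a 1 = n / (Real.Gamma (α + 1) : ℂ) ∧
  ∀ k : ℕ, 1 ≤ k →
    a (k + 1) = (l * (∑ j ∈ Finset.Ico 1 k, a j * a (k - j)) + m * a k) *
      ((Real.Gamma (α * (k:ℝ) + 1) / Real.Gamma (α * (k:ℝ) + α + 1) : ℝ) : ℂ)

/-- Convergence radius of the fractional power series `∑_{k≥1} a_k t^(αk)`. -/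
noncomputable def radius (α : ℝ) (a : ℕ → ℂ) : ENNReal :=
  ⨆ (t : NNReal) (_ : Summable fun k : ℕ => ‖a k‖ * (t : ℝ) ^ (α * (k : ℝ))), (t : ENNReal)

section AuxLemmas



lemma gamma_interp {x y θ : ℝ} (hx : 0 < x) (hy : 0 < y) (hθ0 : 0 ≤ θ) (hθ1 : θ ≤ 1) :
    Real.Gamma ((1-θ)*x + θ*y) ≤ Real.Gamma x ^ (1-θ) * Real.Gamma y ^ θ := by
  have h := Real.convexOn_log_Gamma.2 (Set.mem_Ioi.2 hx) (Set.mem_Ioi.2 hy)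
    (by linarith : (0:ℝ) ≤ 1-θ) hθ0 (by ring)
  simp only [Function.comp, smul_eq_mul] at h
  have hz : 0 < (1-θ)*x + θ*y := by
    rcases eq_or_lt_of_le hθ1 with h1 | h1
    · subst θ; simpa using hy
    · have : 0 < (1-θ)*x := mul_pos (by linarith) hx
      nlinarith [mul_nonneg hθ0 hy.le]
  have hΓz := Real.Gamma_pos_of_pos hz
  have hΓx := Real.Gamma_pos_of_pos hx
  have hΓy := Real.Gamma_pos_of_pos hy
  calc Real.Gamma ((1-θ)*x + θ*y) = Real.exp (Real.log (Real.Gamma ((1-θ)*x + θ*y))) := (Real.exp_log hΓz).symm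
    _ ≤ Real.exp ((1-θ) * Real.log (Real.Gamma x) + θ * Real.log (Real.Gamma y)) := Real.exp_le_exp.2 h
    _ = Real.Gamma x ^ (1-θ) * Real.Gamma y ^ θ := by
        rw [Real.exp_add, Real.rpow_def_of_pos hΓx, Real.rpow_def_of_pos hΓy, mul_comm (Real.log _), mul_comm (Real.log _)]

lemma gamma_ratio_A {α x : ℝ} (hα0 : 0 < α) (hα1 : α ≤ 1) (hx : 0 ≤ x) :
    Real.Gamma (x + α + 1) ≤ Real.Gamma (x+1) * (x+1) ^ α := by
  have h1 : (0:ℝ) < x + 1 := by linarith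
  have h2 : (0:ℝ) < x + 2 := by linarith
  have key := gamma_interp h1 h2 hα0.le hα1
  have e1 : (1-α)*(x+1) + α*(x+2) = x + α + 1 := by ring
  rw [e1] at key
  have e2 : Real.Gamma (x+2) = (x+1) * Real.Gamma (x+1) := by
    have : Real.Gamma ((x+1)+1) = (x+1) * Real.Gamma (x+1) := Real.Gamma_add_one (by positivity)
    rw [← this]; ring_nf
  rw [e2] at key
  have hΓ := Real.Gamma_pos_of_pos h1
  calc Real.Gamma (x + α + 1) ≤ Real.Gamma (x+1) ^ (1-α) * ((x+1) * Real.Gamma (x+1)) ^ α := key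
    _ = Real.Gamma (x+1) * (x+1) ^ α := by
        rw [Real.mul_rpow h1.le hΓ.le, ← mul_assoc, mul_comm (Real.Gamma (x+1) ^ (1-α)),
          mul_assoc, ← Real.rpow_add hΓ]
        norm_num
        ring

lemma gamma_ratio_B {α x : ℝ} (hα0 : 0 < α) (hα2 : α ≤ 2) (hx : 0 ≤ x) :
    Real.Gamma (x + α + 1) ≤ Real.Gamma (x+1) * (x+2) ^ α := by
  have h1 : (0:ℝ) < x + 1 := by linarith
  have h2 : (0:ℝ) < x + 2 := by linarith
  have h3 : (0:ℝ) < x + 3 := by linarith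
  have key := gamma_interp h1 h3 (by linarith : (0:ℝ) ≤ α/2) (by linarith : α/2 ≤ 1)
  have e1 : (1-α/2)*(x+1) + (α/2)*(x+3) = x + α + 1 := by ring
  rw [e1] at key
  have e3 : Real.Gamma (x+3) = (x+2) * ((x+1) * Real.Gamma (x+1)) := by
    have a1 : Real.Gamma ((x+2)+1) = (x+2) * Real.Gamma (x+2) := Real.Gamma_add_one (by positivity)
    have a2 : Real.Gamma ((x+1)+1) = (x+1) * Real.Gamma (x+1) := Real.Gamma_add_one (by positivity)
    have : Real.Gamma (x+3) = (x+2) * Real.Gamma (x+2) := by rw [← a1]; ring_nf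
    rw [this, show x+2 = (x+1)+1 by ring, a2]
  rw [e3] at key
  have hΓ := Real.Gamma_pos_of_pos h1
  have step : Real.Gamma (x+1) ^ (1-α/2) * ((x+2) * ((x+1) * Real.Gamma (x+1))) ^ (α/2)
      = Real.Gamma (x+1) * ((x+2)*(x+1)) ^ (α/2) := by
    rw [show (x+2) * ((x+1) * Real.Gamma (x+1)) = ((x+2)*(x+1)) * Real.Gamma (x+1) by ring,
      Real.mul_rpow (by positivity) hΓ.le, ← mul_assoc, mul_comm (Real.Gamma (x+1) ^ (1-α/2)),
      mul_assoc, ← Real.rpow_add hΓ]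
    norm_num
    ring
  rw [step] at key
  refine key.trans ?_
  gcongr
  have : ((x+2)*(x+1)) ^ (α/2) ≤ ((x+2)*(x+2)) ^ (α/2) := by
    apply Real.rpow_le_rpow (by positivity) (by nlinarith) (by linarith)
  refine this.trans ?_
  rw [show (x+2)*(x+2) = (x+2)^(2:ℕ) by ring, ← Real.rpow_natCast (x+2) 2, ← Real.rpow_mul h2.le,
    show (2:ℕ) * (α/2) = α by push_cast; ring]


lemma riccati_real {α l m n : ℝ} (hα : 0 < α) (hl : 0 ≤ l) (hm : 0 ≤ m) (hn : 0 ≤ n)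
    {a : ℕ → ℂ} (ha : IsRiccatiSeq α l m n a) :
    ∀ k, a k = ((‖a k‖ : ℝ) : ℂ) := by
  intro k
  induction k using Nat.strong_induction_on with
  | _ k IH =>
    match k with
    | 0 => rw [ha.1]; simp
    | 1 =>
      have hΓ : 0 < Real.Gamma (α + 1) := Real.Gamma_pos_of_pos (by linarith)
      have h1 : a 1 = (((n / Real.Gamma (α+1)) : ℝ) : ℂ) := by rw [ha.2.1]; push_cast; ring
      rw [h1, Complex.norm_real, Real.norm_of_nonneg (by positivity)]
    | (k+2) =>
      have hk : 1 ≤ k + 1 := Nat.le_add_left 1 k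
      have hrec := ha.2.2 (k+1) hk
      have hΓpos : 0 < Real.Gamma (α * ((k:ℝ)+1) + 1) := Real.Gamma_pos_of_pos (by positivity)
      have hΓpos2 : 0 < Real.Gamma (α * ((k:ℝ)+1) + α + 1) := Real.Gamma_pos_of_pos (by positivity)
      have hsum : (∑ j ∈ Finset.Ico 1 (k+1), a j * a (k+1-j))
          = (((∑ j ∈ Finset.Ico 1 (k+1), ‖a j‖ * ‖a (k+1-j)‖) : ℝ) : ℂ) := by
        push_cast
        refine Finset.sum_congr rfl fun j hj => ?_
        obtain ⟨hj1, hj2⟩ := Finset.mem_Ico.1 hj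
        rw [IH j (by omega), IH (k+1-j) (by omega)]
        simp
      set S : ℝ := ∑ j ∈ Finset.Ico 1 (k+1), ‖a j‖ * ‖a (k+1-j)‖ with hS
      have hSnn : 0 ≤ S := Finset.sum_nonneg fun j _ => mul_nonneg (norm_nonneg _) (norm_nonneg _)
      set r : ℝ := ‖a (k+1)‖ with hr
      have hrnn : 0 ≤ r := norm_nonneg _
      have hak : a (k+1) = ((r : ℝ) : ℂ) := IH (k+1) (by omega)
      set g : ℝ := Real.Gamma (α * ((k:ℝ)+1) + 1) / Real.Gamma (α * ((k:ℝ)+1) + α + 1) with hg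
      have hgpos : 0 ≤ g := le_of_lt (div_pos hΓpos hΓpos2)
      have hval : a (k+2) = (((l * S + m * r) * g : ℝ) : ℂ) := by
        have : ((k:ℕ)+1+1) = k + 2 := rfl
        rw [← this, hrec, hsum, hak]
        simp only [hg]
        push_cast
        ring
      rw [hval, Complex.norm_real, Real.norm_of_nonneg
        (mul_nonneg (add_nonneg (mul_nonneg hl hSnn) (mul_nonneg hm hrnn)) hgpos)]

lemma riccati_norm_rec {α l m n : ℝ} (hα : 0 < α) (hl : 0 ≤ l) (hm : 0 ≤ m) (hn : 0 ≤ n)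
    {a : ℕ → ℂ} (ha : IsRiccatiSeq α l m n a) :
    ‖a 1‖ = n / Real.Gamma (α+1) ∧
    ∀ k, 1 ≤ k → ‖a (k+1)‖ = (l * (∑ j ∈ Finset.Ico 1 k, ‖a j‖ * ‖a (k-j)‖) + m * ‖a k‖) *
      (Real.Gamma (α * (k:ℝ) + 1) / Real.Gamma (α * (k:ℝ) + α + 1)) := by
  have H := riccati_real hα hl hm hn ha
  constructor
  · have hΓ : 0 < Real.Gamma (α + 1) := Real.Gamma_pos_of_pos (by linarith)
    have h1 : a 1 = (((n / Real.Gamma (α+1)) : ℝ) : ℂ) := by rw [ha.2.1]; push_cast; ring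
    rw [h1, Complex.norm_real, Real.norm_of_nonneg (by positivity)]
  · intro k hk
    have hrec := ha.2.2 k hk
    have hΓpos : 0 < Real.Gamma (α * (k:ℝ) + 1) := Real.Gamma_pos_of_pos (by positivity)
    have hΓpos2 : 0 < Real.Gamma (α * (k:ℝ) + α + 1) := Real.Gamma_pos_of_pos (by positivity)
    have hsum : (∑ j ∈ Finset.Ico 1 k, a j * a (k-j))
        = (((∑ j ∈ Finset.Ico 1 k, ‖a j‖ * ‖a (k-j)‖) : ℝ) : ℂ) := by
      push_cast
      refine Finset.sum_congr rfl fun j hj => ?_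
      rw [H j, H (k-j)]
      simp
    set S : ℝ := ∑ j ∈ Finset.Ico 1 k, ‖a j‖ * ‖a (k-j)‖ with hS
    have hSnn : 0 ≤ S := Finset.sum_nonneg fun j _ => mul_nonneg (norm_nonneg _) (norm_nonneg _)
    set r : ℝ := ‖a k‖ with hr
    have hrnn : 0 ≤ r := norm_nonneg _
    have hak : a k = ((r : ℝ) : ℂ) := H k
    set g : ℝ := Real.Gamma (α * (k:ℝ) + 1) / Real.Gamma (α * (k:ℝ) + α + 1) with hg
    have hgpos : 0 ≤ g := le_of_lt (div_pos hΓpos hΓpos2)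
    have hval : a (k+1) = (((l * S + m * r) * g : ℝ) : ℂ) := by
      rw [hrec, hsum, hak]
      simp only [hg]
      push_cast
      ring
    rw [hval, Complex.norm_real, Real.norm_of_nonneg
      (mul_nonneg (add_nonneg (mul_nonneg hl hSnn) (mul_nonneg hm hrnn)) hgpos)]


lemma radius_mono {α : ℝ} {a a0 : ℕ → ℂ} (h : ∀ k, ‖a0 k‖ ≤ ‖a k‖) :
    radius α a ≤ radius α a0 := by
  refine iSup_le fun t => iSup_le fun hsum => ?_
  have hsum0 : Summable fun k : ℕ => ‖a0 k‖ * (t : ℝ) ^ (α * (k : ℝ)) := by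
    refine Summable.of_nonneg_of_le (fun k => by positivity) (fun k => ?_) hsum
    exact mul_le_mul_of_nonneg_right (h k) (by positivity)
  exact le_iSup₂ (f := fun (t : NNReal) (_ : Summable fun k : ℕ => ‖a0 k‖ * (t : ℝ) ^ (α * (k : ℝ))) => (t : ENNReal)) t hsum0

lemma radius_le_of_lower {α : ℝ} (hα : 0 < α) (a0 : ℕ → ℂ) (A q R : ℝ) (hA : 0 < A) (hq : 0 < q)
    (hlow : ∀ m : ℕ, A * q^m ≤ ‖a0 (2*m+1)‖)
    (hR0 : 0 ≤ R) (hR : (1/q) ^ (1/(2*α)) ≤ R) :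
    radius α a0 ≤ ENNReal.ofReal R := by
  refine iSup_le fun t => iSup_le fun hsum => ?_
  rw [← ENNReal.ofReal_coe_nnreal]
  refine ENNReal.ofReal_le_ofReal ?_
  rcases eq_or_lt_of_le (t.coe_nonneg) with h0 | h0
  · rw [← h0]; exact hR0
  -- t > 0
  set s : ℝ := (t : ℝ)
  have key : q * s ^ (2*α) ≤ 1 := by
    by_contra hgt
    push_neg at hgt
    have hterm : ∀ m : ℕ, A * s ^ α ≤ ‖a0 (2*m+1)‖ * s ^ (α * ((2*m+1 : ℕ) : ℝ)) := by
      intro m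
      have e1 : α * ((2*m+1 : ℕ) : ℝ) = α + (2*α) * (m : ℝ) := by push_cast; ring
      have e2 : s ^ (α * ((2*m+1 : ℕ) : ℝ)) = s ^ α * (s ^ (2*α)) ^ m := by
        rw [e1, Real.rpow_add h0, Real.rpow_mul h0.le, Real.rpow_natCast]
      rw [e2]
      have h1 : A * q ^ m * (s ^ α * (s ^ (2*α)) ^ m) ≤ ‖a0 (2*m+1)‖ * (s ^ α * (s ^ (2*α)) ^ m) := by
        apply mul_le_mul_of_nonneg_right (hlow m)
        positivity
      refine le_trans ?_ h1
      have h2 : (1:ℝ) ≤ (q * s ^ (2*α)) ^ m := one_le_pow₀ hgt.le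
      rw [mul_pow] at h2
      calc A * s ^ α = A * 1 * s ^ α := by ring
        _ ≤ A * (q ^ m * (s ^ (2*α)) ^ m) * s ^ α := by
            apply mul_le_mul_of_nonneg_right _ (by positivity)
            exact mul_le_mul_of_nonneg_left h2 hA.le
        _ = A * q ^ m * (s ^ α * (s ^ (2*α)) ^ m) := by ring
    have htend : Filter.Tendsto (fun m : ℕ => ‖a0 (2*m+1)‖ * s ^ (α * ((2*m+1 : ℕ) : ℝ))) Filter.atTop (nhds 0) := by
      have := hsum.tendsto_atTop_zero
      exact this.comp (Filter.tendsto_atTop_mono (fun m => by omega : ∀ m : ℕ, m ≤ 2*m+1) Filter.tendsto_id)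
    have : A * s ^ α ≤ 0 := ge_of_tendsto htend (Filter.Eventually.of_forall hterm)
    nlinarith [Real.rpow_pos_of_pos h0 α, hA]
  -- conclude
  have h2α : (0:ℝ) < 2*α := by linarith
  have hs2 : s ^ (2*α) ≤ 1/q := by
    rw [le_div_iff₀ hq] at *
    nlinarith [Real.rpow_pos_of_pos h0 (2*α)]
  calc s = (s ^ (2*α)) ^ (1/(2*α)) := by
        rw [← Real.rpow_mul h0.le, mul_one_div, div_self h2α.ne', Real.rpow_one]
    _ ≤ (1/q) ^ (1/(2*α)) := Real.rpow_le_rpow (by positivity) hs2 (by positivity)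
    _ ≤ R := hR


lemma conv_odd_le {r : ℕ → ℝ} (hr : ∀ k, 0 ≤ r k) (m : ℕ) :
    ∑ i ∈ Finset.range (m+1), r (2*i+1) * r (2*(m-i)+1)
      ≤ ∑ j ∈ Finset.Ico 1 (2*m+2), r j * r (2*m+2-j) := by
  have hinj : ∀ x ∈ Finset.range (m+1), ∀ y ∈ Finset.range (m+1), 2*x+1 = 2*y+1 → x = y := by
    intros; omega
  have himg : ∑ i ∈ Finset.range (m+1), r (2*i+1) * r (2*(m-i)+1)
      = ∑ j ∈ (Finset.range (m+1)).image (fun i => 2*i+1), r j * r (2*m+2-j) := by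
    rw [Finset.sum_image hinj]
    refine Finset.sum_congr rfl fun i hi => ?_
    have hi' := Finset.mem_range.1 hi
    congr 2
    omega
  rw [himg]
  apply Finset.sum_le_sum_of_subset_of_nonneg
  · intro j hj
    simp only [Finset.mem_image, Finset.mem_range] at hj
    obtain ⟨i, hi, rfl⟩ := hj
    simp only [Finset.mem_Ico]
    omega
  · intro j _ _
    exact mul_nonneg (hr j) (hr _)

lemma lower_bound_geo
    {α lam b1 c κ : ℝ} (hα : 0 < α) (hlam : 0 < lam) (hb1 : 0 < b1)
    (hc : 0 < c) (hκ0 : 0 < κ) (hκ1 : κ ≤ 1)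
    (hbase1 : κ * c ≤ Real.Gamma (α*(2:ℝ)+1)/Real.Gamma (α*(2:ℝ)+α+1))
    (hstep : ∀ m : ℕ, 1 ≤ m →
      c ≤ (Real.Gamma (α*((2*m+2 : ℕ):ℝ)+1)/Real.Gamma (α*((2*m+2 : ℕ):ℝ)+α+1)) * (2 + ((m:ℝ)-1)*κ))
    {r : ℕ → ℝ} (hnn : ∀ k, 0 ≤ r k) (hr1 : r 1 = b1)
    (hrec : ∀ k : ℕ, 1 ≤ k → r (k+1) =
      lam * (∑ j ∈ Finset.Ico 1 k, r j * r (k-j)) * (Real.Gamma (α*(k:ℝ)+1)/Real.Gamma (α*(k:ℝ)+α+1))) :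
    ∀ m : ℕ, κ * b1 * (lam * b1 * c)^m ≤ r (2*m+1) := by
  intro m
  induction m using Nat.strong_induction_on with
  | _ m IH =>
    match m with
    | 0 => simpa [hr1] using mul_le_of_le_one_left hb1.le hκ1
    | 1 =>
      have h := hrec 2 (by norm_num)
      rw [show Finset.Ico 1 2 = {1} from rfl, Finset.sum_singleton] at h
      push_cast at h
      have key : κ * b1 * (lam * b1 * c)^1 ≤
          lam * (r 1 * r (2-1)) * (Real.Gamma (α*2+1)/Real.Gamma (α*2+α+1)) := by
        rw [pow_one, show (2:ℕ)-1 = 1 from rfl, hr1]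
        calc κ * b1 * (lam*b1*c) = lam*(b1*b1) * (κ*c) := by ring
          _ ≤ lam*(b1*b1) * (Real.Gamma (α*2+1)/Real.Gamma (α*2+α+1)) :=
              mul_le_mul_of_nonneg_left hbase1 (by positivity)
      change κ * b1 * (lam * b1 * c)^1 ≤ r 3
      rw [h]
      exact key
    | (m+2) =>
      set q : ℝ := lam * b1 * c with hq
      have hqpos : 0 < q := by positivity
      set g : ℝ := Real.Gamma (α*((2*(m+1)+2 : ℕ):ℝ)+1)/Real.Gamma (α*((2*(m+1)+2 : ℕ):ℝ)+α+1) with hg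
      have hgpos : 0 < g := by
        apply div_pos <;> apply Real.Gamma_pos_of_pos <;> positivity
      have hrec' : r (2*(m+2)+1) =
          lam * (∑ j ∈ Finset.Ico 1 (2*(m+1)+2), r j * r ((2*(m+1)+2)-j)) * g := by
        have h := hrec (2*(m+1)+2) (by omega)
        rw [show 2*(m+1)+2+1 = 2*(m+2)+1 by omega] at h
        exact h
      -- lower bound for the odd-indexed convolution
      have hodd := conv_odd_le hnn (m+1)
      have hf0 : b1 * (κ * b1 * q^(m+1)) ≤ r (2*0+1) * r (2*((m+1)-0)+1) := by
        have h1 := IH (m+1) (by omega)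
        have := mul_le_mul_of_nonneg_left h1 hb1.le
        simpa [hr1] using this
      have hfm : (κ * b1 * q^(m+1)) * b1 ≤ r (2*(m+1)+1) * r (2*((m+1)-(m+1))+1) := by
        have h1 := IH (m+1) (by omega)
        have := mul_le_mul_of_nonneg_right h1 hb1.le
        simpa [hr1] using this
      have hmid : ∀ i ∈ Finset.Ico 1 (m+1),
          κ^2 * b1^2 * q^(m+1) ≤ r (2*i+1) * r (2*((m+1)-i)+1) := by
        intro i hi
        obtain ⟨hi1, hi2⟩ := Finset.mem_Ico.1 hi
        have h1 := IH i (by omega)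
        have h2 := IH ((m+1)-i) (by omega)
        have hle : (κ * b1 * q^i) * (κ * b1 * q^((m+1)-i)) ≤ r (2*i+1) * r (2*((m+1)-i)+1) :=
          mul_le_mul h1 h2 (by positivity) (hnn _)
        refine le_trans (le_of_eq ?_) hle
        rw [show κ*b1*q^i*(κ*b1*q^((m+1)-i)) = κ^2*b1^2*(q^i*q^((m+1)-i)) from by ring,
          ← pow_add, show i + ((m+1)-i) = m+1 by omega]
      have hS : κ * b1^2 * q^(m+1) * (2 + (m:ℝ)*κ) ≤
          ∑ i ∈ Finset.range (m+1+1), r (2*i+1) * r (2*((m+1)-i)+1) := by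
        have e1 : ∑ i ∈ Finset.range (m+1+1), r (2*i+1) * r (2*((m+1)-i)+1)
            = (r (2*0+1) * r (2*((m+1)-0)+1) + ∑ i ∈ Finset.Ico 1 (m+1), r (2*i+1) * r (2*((m+1)-i)+1))
              + r (2*(m+1)+1) * r (2*((m+1)-(m+1))+1) := by
          rw [Finset.sum_range_succ]
          congr 1
          rw [Finset.range_eq_Ico, Finset.sum_eq_sum_Ico_succ_bot (by omega : 0 < m+1)]
        rw [e1]
        have hmidsum : (m:ℝ) * (κ^2 * b1^2 * q^(m+1)) ≤
            ∑ i ∈ Finset.Ico 1 (m+1), r (2*i+1) * r (2*((m+1)-i)+1) := by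
          have := Finset.card_nsmul_le_sum (Finset.Ico 1 (m+1)) _ _ hmid
          rwa [Nat.card_Ico, nsmul_eq_mul, Nat.add_sub_cancel] at this
        have := add_le_add (add_le_add hf0 hmidsum) hfm
        refine le_trans (le_of_eq (by ring)) this
      -- combine
      rw [hrec']
      have hSnn : (0:ℝ) ≤ κ * b1^2 * q^(m+1) * (2 + (m:ℝ)*κ) := by positivity
      have hchain : lam * (κ * b1^2 * q^(m+1) * (2 + (m:ℝ)*κ)) * g ≤
          lam * (∑ j ∈ Finset.Ico 1 (2*(m+1)+2), r j * r ((2*(m+1)+2)-j)) * g := by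
        apply mul_le_mul_of_nonneg_right _ hgpos.le
        apply mul_le_mul_of_nonneg_left (le_trans (le_trans hS hodd) le_rfl) hlam.le
      refine le_trans ?_ hchain
      have hstep' := hstep (m+1) (by omega)
      rw [← hg] at hstep'
      push_cast at hstep'
      calc κ * b1 * q^(m+2) = (κ * b1^2 * q^(m+1)) * (lam * c) := by rw [hq]; ring
        _ ≤ (κ * b1^2 * q^(m+1)) * (lam * (g * (2 + (m:ℝ)*κ))) := by
            apply mul_le_mul_of_nonneg_left _ (by positivity)
            apply mul_le_mul_of_nonneg_left _ hlam.le
            convert hstep' using 2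
            · rfl
            push_cast
            ring
        _ = lam * (κ * b1^2 * q^(m+1) * (2 + (m:ℝ)*κ)) * g := by ring

lemma lower_bound_weighted
    {α lam b1 q Bα : ℝ} (hα1 : 1 < α) (hlam : 0 < lam) (hb1 : 0 < b1) (hq : 0 < q) (hB : 0 < Bα)
    (hconv : ∀ m : ℕ, ((m:ℝ)+1)^(2*α-1) * Bα ≤
      ∑ i ∈ Finset.range (m+1), ((i:ℝ)+1)^(α-1) * (((m-i : ℕ):ℝ)+1)^(α-1))
    (hstep : ∀ m : ℕ, q * ((m:ℝ)+2)^(α-1) ≤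
      lam * b1 * (Real.Gamma (α*((2*m+2:ℕ):ℝ)+1)/Real.Gamma (α*((2*m+2:ℕ):ℝ)+α+1))
        * (((m:ℝ)+1)^(2*α-1) * Bα))
    {r : ℕ → ℝ} (hnn : ∀ k, 0 ≤ r k) (hr1 : r 1 = b1)
    (hrec : ∀ k : ℕ, 1 ≤ k → r (k+1) =
      lam * (∑ j ∈ Finset.Ico 1 k, r j * r (k-j)) * (Real.Gamma (α*(k:ℝ)+1)/Real.Gamma (α*(k:ℝ)+α+1))) :
    ∀ m : ℕ, b1 * q^m * ((m:ℝ)+1)^(α-1) ≤ r (2*m+1) := by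
  intro m
  induction m using Nat.strong_induction_on with
  | _ m IH =>
    match m with
    | 0 => simp [hr1, Real.one_rpow]
    | (m+1) =>
      have hα0 : (0:ℝ) < α := by linarith
      set g : ℝ := Real.Gamma (α*((2*m+2:ℕ):ℝ)+1)/Real.Gamma (α*((2*m+2:ℕ):ℝ)+α+1) with hg
      have hgpos : 0 < g := by
        apply div_pos <;> apply Real.Gamma_pos_of_pos <;> positivity
      have hrec' : r (2*(m+1)+1) = lam * (∑ j ∈ Finset.Ico 1 (2*m+2), r j * r ((2*m+2)-j)) * g := by
        have h := hrec (2*m+2) (by omega)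
        rw [show 2*m+2+1 = 2*(m+1)+1 by omega] at h
        exact h
      have hodd := conv_odd_le hnn m
      have hterm : ∀ i ∈ Finset.range (m+1),
          b1^2 * q^m * (((i:ℝ)+1)^(α-1) * (((m-i : ℕ):ℝ)+1)^(α-1)) ≤ r (2*i+1) * r (2*(m-i)+1) := by
        intro i hi
        have hi' := Finset.mem_range.1 hi
        have h1 := IH i (by omega)
        have h2 := IH (m-i) (by omega)
        have hle : (b1 * q^i * ((i:ℝ)+1)^(α-1)) * (b1 * q^(m-i) * (((m-i:ℕ):ℝ)+1)^(α-1))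
            ≤ r (2*i+1) * r (2*(m-i)+1) := mul_le_mul h1 h2 (by positivity) (hnn _)
        refine le_trans (le_of_eq ?_) hle
        rw [show (b1 * q^i * ((i:ℝ)+1)^(α-1)) * (b1 * q^(m-i) * (((m-i:ℕ):ℝ)+1)^(α-1))
            = b1^2 * (q^i*q^(m-i)) * (((i:ℝ)+1)^(α-1) * (((m-i:ℕ):ℝ)+1)^(α-1)) from by ring,
          ← pow_add, show i + (m-i) = m by omega]
      have hsum : b1^2 * q^m * (((m:ℝ)+1)^(2*α-1) * Bα)
          ≤ ∑ j ∈ Finset.Ico 1 (2*m+2), r j * r ((2*m+2)-j) := by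
        refine le_trans ?_ hodd
        calc b1^2 * q^m * (((m:ℝ)+1)^(2*α-1) * Bα)
            ≤ b1^2 * q^m * (∑ i ∈ Finset.range (m+1), ((i:ℝ)+1)^(α-1) * (((m-i : ℕ):ℝ)+1)^(α-1)) :=
              mul_le_mul_of_nonneg_left (hconv m) (by positivity)
          _ = ∑ i ∈ Finset.range (m+1), b1^2 * q^m * (((i:ℝ)+1)^(α-1) * (((m-i : ℕ):ℝ)+1)^(α-1)) := by
              rw [Finset.mul_sum]
          _ ≤ ∑ i ∈ Finset.range (m+1), r (2*i+1) * r (2*(m-i)+1) := Finset.sum_le_sum hterm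
      rw [hrec']
      have hstep' := hstep m
      rw [← hg] at hstep'
      rw [show (((m+1:ℕ)):ℝ) = (m:ℝ)+1 from by push_cast; ring]
      calc b1 * q^(m+1) * (((m:ℝ)+1)+1)^(α-1)
          = b1 * q^m * (q * ((m:ℝ)+2)^(α-1)) := by rw [pow_succ]; ring
        _ ≤ b1 * q^m * (lam * b1 * g * (((m:ℝ)+1)^(2*α-1) * Bα)) :=
            mul_le_mul_of_nonneg_left hstep' (by positivity)
        _ = lam * (b1^2 * q^m * (((m:ℝ)+1)^(2*α-1) * Bα)) * g := by ring
        _ ≤ lam * (∑ j ∈ Finset.Ico 1 (2*m+2), r j * r ((2*m+2)-j)) * g := by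
            apply mul_le_mul_of_nonneg_right _ hgpos.le
            exact mul_le_mul_of_nonneg_left hsum hlam.le


-- helper: x^α ≤ 6/5 when x ≤ T, α ≤ 1/K, T ≤ (6/5)^K
lemma piece_bound {α x T : ℝ} {K : ℕ} (hK : 1 ≤ K) (h0 : 0 < α) (hαK : α ≤ 1/(K:ℝ))
    (hx0 : 0 ≤ x) (hxT : x ≤ T) (h1T : 1 ≤ T) (hTK : T ≤ (6/5)^K) :
    x ^ α ≤ 6/5 := by
  have h1 : x ^ α ≤ T ^ α := Real.rpow_le_rpow hx0 hxT h0.le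
  have h2 : T ^ α ≤ T ^ (1/(K:ℝ)) := Real.rpow_le_rpow_of_exponent_le h1T hαK
  have h3 : T ^ (1/(K:ℝ)) ≤ ((6/5)^K : ℝ) ^ (1/(K:ℝ)) :=
    Real.rpow_le_rpow (by linarith) hTK (by positivity)
  have h4 : (((6:ℝ)/5)^K : ℝ) ^ (1/(K:ℝ)) = 6/5 := by
    rw [← Real.rpow_natCast (6/5 : ℝ) K, ← Real.rpow_mul (by norm_num)]
    rw [mul_one_div, div_self (by positivity : ((K:ℝ)) ≠ 0), Real.rpow_one]
  linarith

lemma E1 {α : ℝ} (h0 : 0 < α) (h1 : α ≤ 1) : ((4*α+1)/(5*α))^α ≤ 6/5 := by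
  set t : ℝ := (4*α+1)/(5*α) with ht
  have htpos : 0 < t := by positivity
  have ht1 : 1 ≤ t := by
    rw [ht, le_div_iff₀ (by positivity)]
    linarith
  -- t ≤ 4/5 + 1/(5*a) when a ≤ α
  have hbound : ∀ a : ℝ, 0 < a → a ≤ α → t ≤ 4/5 + 1/(5*a) := by
    intro a ha haα
    rw [ht, div_le_iff₀ (by positivity)]
    have : 1/(5*a) * (5*α) = α/a := by field_simp
    rw [add_mul, this]
    have : (1:ℝ) ≤ α/a := (one_le_div ha).2 haα
    nlinarith
  rcases le_or_gt (1/2 : ℝ) α with h | h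
  · have : t ≤ 6/5 := by rw [ht, div_le_iff₀ (by positivity)]; linarith
    calc t^α ≤ t^(1:ℝ) := Real.rpow_le_rpow_of_exponent_le ht1 h1
      _ = t := Real.rpow_one t
      _ ≤ 6/5 := this
  rcases le_or_gt (1/3 : ℝ) α with h' | h'
  · exact piece_bound (K := 2) (by norm_num) h0 (by rw [Nat.cast_ofNat]; linarith) htpos.le
      (hbound (1/3) (by norm_num) h') (by norm_num) (by norm_num)
  rcases le_or_gt (1/4 : ℝ) α with h' | h'
  · exact piece_bound (K := 3) (by norm_num) h0 (by push_cast; linarith) htpos.le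
      (hbound (1/4) (by norm_num) h') (by norm_num) (by norm_num)
  rcases le_or_gt (1/5 : ℝ) α with h' | h'
  · exact piece_bound (K := 4) (by norm_num) h0 (by push_cast; linarith) htpos.le
      (hbound (1/5) (by norm_num) h') (by norm_num) (by norm_num)
  rcases le_or_gt (1/6 : ℝ) α with h' | h'
  · exact piece_bound (K := 5) (by norm_num) h0 (by push_cast; linarith) htpos.le
      (hbound (1/6) (by norm_num) h') (by norm_num) (by norm_num)
  rcases le_or_gt (1/8 : ℝ) α with h' | h'
  · exact piece_bound (K := 6) (by norm_num) h0 (by push_cast; linarith) htpos.le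
      (hbound (1/8) (by norm_num) h') (by norm_num) (by norm_num)
  rcases le_or_gt (1/12 : ℝ) α with h' | h'
  · exact piece_bound (K := 8) (by norm_num) h0 (by push_cast; linarith) htpos.le
      (hbound (1/12) (by norm_num) h') (by norm_num) (by norm_num)
  rcases le_or_gt (1/16 : ℝ) α with h' | h'
  · exact piece_bound (K := 12) (by norm_num) h0 (by push_cast; linarith) htpos.le
      (hbound (1/16) (by norm_num) h') (by norm_num) (by norm_num)
  -- α ≤ 1/16 : exponential estimate
  · have hα16 : α ≤ 1/16 := h'.le
    have ht4 : t ≤ 1/(4*α) := by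
      rw [ht, div_le_div_iff₀ (by positivity) (by positivity)]
      nlinarith
    have hlog : Real.log (1/(4*α)) ≤ 1/(4*α) / Real.exp 1 := by
      have hy : 0 < 1/(4*α) := by positivity
      have := Real.log_le_sub_one_of_pos (x := 1/(4*α) / Real.exp 1) (by positivity)
      rw [Real.log_div hy.ne' (Real.exp_pos 1).ne', Real.log_exp] at this
      linarith
    have hαlog : α * Real.log (1/(4*α)) ≤ 1/(4*Real.exp 1) := by
      have h2 : α * Real.log (1/(4*α)) ≤ α * (1/(4*α) / Real.exp 1) :=
        mul_le_mul_of_nonneg_left hlog h0.le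
      have : α * (1/(4*α) / Real.exp 1) = 1/(4*Real.exp 1) := by
        field_simp
      linarith
    have he : (3/2 : ℝ) ≤ Real.exp 1 := by
      have := Real.add_one_le_exp 1
      linarith
    have hfinal : 1/(4*Real.exp 1) ≤ Real.log (6/5) := by
      have hlog65 : (1/6 : ℝ) ≤ Real.log (6/5) := by
        have := Real.log_le_sub_one_of_pos (x := (5/6 : ℝ)) (by norm_num)
        have e : Real.log (5/6 : ℝ) = - Real.log (6/5) := by
          rw [← Real.log_inv]; norm_num
        rw [e] at this
        linarith
      have : 1/(4*Real.exp 1) ≤ 1/6 := by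
        rw [div_le_div_iff₀ (by positivity) (by norm_num)]
        linarith
      linarith
    calc t^α ≤ (1/(4*α))^α := Real.rpow_le_rpow htpos.le ht4 h0.le
      _ = Real.exp (α * Real.log (1/(4*α))) := by
          rw [Real.rpow_def_of_pos (by positivity), mul_comm]
      _ ≤ Real.exp (Real.log (6/5)) := Real.exp_le_exp.2 (le_trans hαlog hfinal)
      _ = 6/5 := Real.exp_log (by norm_num)

lemma E2 {α : ℝ} (h0 : 0 < α) (h1 : α ≤ 1) :
    2*α ≤ 3 * min 1 ((3/5)*(5*α/(2*α+1))^α) := by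
  rcases min_cases 1 ((3/5)*(5*α/(2*α+1))^α) with ⟨he, _⟩ | ⟨he, _⟩
  · rw [he]; linarith
  rw [he]
  set x : ℝ := 5*α/(2*α+1) with hx
  have hxpos : 0 < x := by positivity
  rcases le_or_gt α (1/3 : ℝ) with h | h
  · -- x ≤ 1, x^α ≥ x
    have hx1 : x ≤ 1 := by rw [hx, div_le_one (by positivity)]; linarith
    have : x^(1:ℝ) ≤ x^α := Real.rpow_le_rpow_of_exponent_ge hxpos hx1 h1
    rw [Real.rpow_one] at this
    have hxge : 5*α/(2*α+1) ≤ x^α := by rw [← hx]; exact this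
    have : 2*α ≤ 3*((3/5) * (5*α/(2*α+1))) := by
      rw [div_le_iff₀ (by positivity : (0:ℝ) < 2*α+1)] at *
      rw [show 3*(3/5*(5*α/(2*α+1))) = 9*α/(2*α+1) by ring, le_div_iff₀ (by positivity)]
      nlinarith
    calc 2*α ≤ 3*((3/5) * (5*α/(2*α+1))) := this
      _ ≤ 3*((3/5) * x^α) := by nlinarith [hxge]
  rcases le_or_gt α (9/10 : ℝ) with h' | h'
  · have hx1 : 1 ≤ x := by rw [hx, le_div_iff₀ (by positivity)]; linarith
    have : (1:ℝ) ≤ x^α := Real.one_le_rpow hx1 h0.le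
    nlinarith
  · -- 9/10 < α ≤ 1
    have hx45 : (45/28 : ℝ) ≤ x := by
      rw [hx, le_div_iff₀ (by positivity)]; linarith
    have k1 : ((45:ℝ)/28)^α ≤ x^α := Real.rpow_le_rpow (by norm_num) hx45 h0.le
    have k2 : ((45:ℝ)/28)^((9:ℝ)/10) ≤ ((45:ℝ)/28)^α :=
      Real.rpow_le_rpow_of_exponent_le (by norm_num) (by linarith)
    have k3 : (10/9 : ℝ) ≤ ((45:ℝ)/28)^((9:ℝ)/10) := by
      have e : ((45:ℝ)/28)^((9:ℝ)/10) = (((45:ℝ)/28)^(9:ℕ))^((1:ℝ)/10) := by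
        rw [← Real.rpow_natCast ((45:ℝ)/28) 9, ← Real.rpow_mul (by norm_num)]
        norm_num
      rw [e]
      have h9 : ((10:ℝ)/9)^(10:ℕ) ≤ ((45:ℝ)/28)^(9:ℕ) := by norm_num
      calc (10/9 : ℝ) = (((10:ℝ)/9)^(10:ℕ))^((1:ℝ)/10) := by
            rw [← Real.rpow_natCast ((10:ℝ)/9) 10, ← Real.rpow_mul (by norm_num)]
            norm_num
        _ ≤ (((45:ℝ)/28)^(9:ℕ))^((1:ℝ)/10) := Real.rpow_le_rpow (by positivity) h9 (by norm_num)
    nlinarith [k1, k2, k3]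

lemma E3 {r s α : ℝ} (hr : 1 ≤ r) (hrs : r ≤ s) (h0 : 0 ≤ α) (h1 : α ≤ 1) :
    s^α ≤ r^α + α*(s-r) := by
  have hrpos : (0:ℝ) < r := by linarith
  set z : ℝ := (s-r)/r with hz
  have hznn : 0 ≤ z := div_nonneg (by linarith) (by linarith)
  have hs : s = r * (1+z) := by rw [hz]; field_simp; ring
  have hb : (1+z)^α ≤ 1 + α*z := rpow_one_add_le_one_add_mul_self (by linarith) h0 h1
  have hra : 0 < r^α := Real.rpow_pos_of_pos hrpos α
  have e : s^α = r^α * (1+z)^α := by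
    rw [hs, Real.mul_rpow hrpos.le (by linarith)]
  rw [e]
  have step1 : r^α * (1+z)^α ≤ r^α * (1 + α*z) := by nlinarith
  refine step1.trans ?_
  have e2 : r^α * (1 + α*z) = r^α + α * (r^α / r) * (s-r) := by
    rw [hz]; field_simp
  rw [e2]
  have hr1 : r^α / r ≤ 1 := by
    rw [div_le_one hrpos]
    calc r^α ≤ r^(1:ℝ) := Real.rpow_le_rpow_of_exponent_le hr h1
      _ = r := Real.rpow_one r
  nlinarith [mul_nonneg h0 (sub_nonneg.2 hrs), Real.rpow_pos_of_pos hrpos α, div_pos hra hrpos]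

lemma E4 {α κ : ℝ} (h0 : 0 < α) (h1 : α ≤ 1) (hκnn : 0 ≤ κ)
    (hκ : 2*α ≤ 3*κ) (hbase : ((4*α+1)/(5*α))^α ≤ 6/5) :
    ∀ n : ℕ, 2 ≤ n → 5*((2*(n:ℝ)+1/α)/5)^α ≤ 6 + 3*((n:ℝ)-2)*κ := by
  intro n hn
  induction n, hn using Nat.le_induction with
  | base =>
    have e : ((2*(2:ℝ)+1/α)/5) = (4*α+1)/(5*α) := by field_simp; ring
    push_cast
    rw [e]
    linarith [hbase]
  | succ n hn IH =>
    have htn1 : (1:ℝ) ≤ (2*(n:ℝ)+1/α)/5 := by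
      rw [le_div_iff₀ (by norm_num)]
      have : (1:ℝ) ≤ 1/α := by rw [le_div_iff₀ h0]; linarith
      have : (2:ℝ) ≤ (n:ℝ) := by exact_mod_cast hn
      linarith
    have hstep : ((2*((n:ℝ)+1)+1/α)/5)^α ≤ ((2*(n:ℝ)+1/α)/5)^α + α*(2/5) := by
      have := E3 (r := (2*(n:ℝ)+1/α)/5) (s := (2*((n:ℝ)+1)+1/α)/5) htn1 (by linarith) h0.le h1
      have e : (2*((n:ℝ)+1)+1/α)/5 - (2*(n:ℝ)+1/α)/5 = 2/5 := by ring
      rw [e] at this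
      exact this
    push_cast
    push_cast at IH
    nlinarith [hstep]


lemma g_lower {α x : ℝ} (h0 : 0 < α) (hx : 0 ≤ x)
    (hub : Real.Gamma (x + α + 1) ≤ Real.Gamma (x+1) * y) (hy : 0 < y) :
    1/y ≤ Real.Gamma (x+1)/Real.Gamma (x+α+1) := by
  have hΓ1 : 0 < Real.Gamma (x+1) := Real.Gamma_pos_of_pos (by linarith)
  have hΓ2 : 0 < Real.Gamma (x+α+1) := Real.Gamma_pos_of_pos (by linarith)
  rw [div_le_div_iff₀ hy hΓ2]
  nlinarith

-- identity: (2αn'+1)^α * c = (5/3) * ((2n'+1/α)/5)^α , c = 5^(1-α)/(3 α^α)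
lemma keyident {α n' : ℝ} (h0 : 0 < α) (hn' : 0 ≤ n') :
    (2*α*n'+1)^α * (5^(1-α)/(3*α^α)) = (5/3) * ((2*n'+1/α)/5)^α := by
  have h5α : (0:ℝ) < 5*α := by linarith
  have e1 : (2*n'+1/α)/5 = (2*α*n'+1)/(5*α) := by field_simp
  rw [e1, Real.div_rpow (by positivity) (by positivity), Real.mul_rpow (by norm_num) h0.le]
  have e2 : (5:ℝ)^(1-α) = 5 / 5^α := by
    rw [Real.rpow_sub (by norm_num), Real.rpow_one]
  rw [e2]
  have h5 : (0:ℝ) < (5:ℝ)^α := Real.rpow_pos_of_pos (by norm_num) α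
  have hα : (0:ℝ) < α^α := Real.rpow_pos_of_pos h0 α
  field_simp

lemma condA_base {α : ℝ} (h0 : 0 < α) (h1 : α ≤ 1) :
    min 1 ((3/5)*(5*α/(2*α+1))^α) * (5^(1-α)/(3*α^α)) ≤
      Real.Gamma (α*2+1)/Real.Gamma (α*2+α+1) := by
  have hc : (0:ℝ) < 5^(1-α)/(3*α^α) := by
    have := Real.rpow_pos_of_pos (show (0:ℝ) < 5 by norm_num) (1-α)
    have := Real.rpow_pos_of_pos h0 α
    positivity
  have step1 : min 1 ((3/5)*(5*α/(2*α+1))^α) * (5^(1-α)/(3*α^α)) ≤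
      ((3/5)*(5*α/(2*α+1))^α) * (5^(1-α)/(3*α^α)) :=
    mul_le_mul_of_nonneg_right (min_le_right _ _) hc.le
  have h2α1 : (0:ℝ) < 2*α+1 := by linarith
  have ident : ((3/5)*(5*α/(2*α+1))^α) * (5^(1-α)/(3*α^α)) = ((2*α+1)^α)⁻¹ := by
    rw [Real.div_rpow (by positivity) h2α1.le, Real.mul_rpow (by norm_num) h0.le]
    have e2 : (5:ℝ)^(1-α) = 5 / 5^α := by
      rw [Real.rpow_sub (by norm_num), Real.rpow_one]
    rw [e2]
    have h5 : (0:ℝ) < (5:ℝ)^α := Real.rpow_pos_of_pos (by norm_num) α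
    have hαα : (0:ℝ) < α^α := Real.rpow_pos_of_pos h0 α
    have h21 : (0:ℝ) < (2*α+1)^α := Real.rpow_pos_of_pos h2α1 α
    field_simp
  rw [ident] at step1
  refine step1.trans ?_
  have := g_lower h0 (by positivity : (0:ℝ) ≤ α*2)
    (gamma_ratio_A h0 h1 (by positivity : (0:ℝ) ≤ α*2)) (Real.rpow_pos_of_pos (by linarith) α)
  rw [one_div] at this
  rw [show α*2+1 = 2*α+1 by ring] at this ⊢
  exact this

lemma condA_step {α : ℝ} (h0 : 0 < α) (h1 : α ≤ 1) : ∀ m : ℕ, 1 ≤ m →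
    5^(1-α)/(3*α^α) ≤ (Real.Gamma (α*((2*m+2:ℕ):ℝ)+1)/Real.Gamma (α*((2*m+2:ℕ):ℝ)+α+1))
      * (2 + ((m:ℝ)-1) * min 1 ((3/5)*(5*α/(2*α+1))^α)) := by
  intro m hm
  set κ : ℝ := min 1 ((3/5)*(5*α/(2*α+1))^α) with hκ
  have hκnn : 0 ≤ κ := le_min (by norm_num) (by positivity)
  set x : ℝ := α*((2*m+2:ℕ):ℝ) with hx
  have hxnn : (0:ℝ) ≤ x := by positivity
  have hgl := g_lower h0 hxnn (gamma_ratio_A h0 h1 hxnn) (Real.rpow_pos_of_pos (by linarith) α)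
  have hE4 := E4 h0 h1 hκnn (E2 h0 h1) (E1 h0 h1) (m+1) (by omega)
  -- x + 1 = 2α(m+1)+1
  have hx1 : x + 1 = 2*α*((m:ℝ)+1)+1 := by rw [hx]; push_cast; ring
  have hid := keyident (α := α) (n' := (m:ℝ)+1) h0 (by positivity)
  have hxpos : (0:ℝ) < (x+1)^α := Real.rpow_pos_of_pos (by linarith) α
  have key : (5^(1-α)/(3*α^α)) * (x+1)^α ≤ 2 + ((m:ℝ)-1)*κ := by
    rw [hx1]
    rw [mul_comm]
    rw [hid]
    push_cast at hE4
    have e : ((m:ℝ)+1) - 2 = (m:ℝ)-1 := by ring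
    rw [e] at hE4
    linarith
  have hcne : 0 < 5^(1-α)/(3*α^α) := by
    have := Real.rpow_pos_of_pos (show (0:ℝ) < 5 by norm_num) (1-α)
    have := Real.rpow_pos_of_pos h0 α
    positivity
  calc 5^(1-α)/(3*α^α) = ((5^(1-α)/(3*α^α)) * (x+1)^α) * (1/(x+1)^α) := by
        field_simp
    _ ≤ (2 + ((m:ℝ)-1)*κ) * (1/(x+1)^α) := by
        apply mul_le_mul_of_nonneg_right key (by positivity)
    _ ≤ (2 + ((m:ℝ)-1)*κ) * (Real.Gamma (x+1)/Real.Gamma (x+α+1)) := by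
        apply mul_le_mul_of_nonneg_left hgl
        have hm1 : (1:ℝ) ≤ (m:ℝ) := by exact_mod_cast hm
        nlinarith
    _ = (Real.Gamma (x+1)/Real.Gamma (x+α+1)) * (2 + ((m:ℝ)-1)*κ) := by ring


lemma beta_cont {α : ℝ} (h1 : 1 < α) : Continuous (fun u : ℝ => u^(α-1)*(1-u)^(α-1)) := by
  have h1' : (0:ℝ) ≤ α - 1 := by linarith
  exact (continuous_id.rpow_const (fun x => Or.inr h1')).mul
    ((continuous_const.sub continuous_id).rpow_const (fun x => Or.inr h1'))

lemma beta_integrableOn {α : ℝ} (h1 : 1 < α) :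
    IntegrableOn (fun u : ℝ => u^(α-1)*(1-u)^(α-1)) (Set.Ioo (0:ℝ) 1) := by
  exact ((beta_cont h1).integrableOn_Icc (a := 0) (b := 1)).mono_set Set.Ioo_subset_Icc_self

lemma two_rpow_two : (2:ℝ)^(2:ℝ) = 4 := by
  have h := Real.rpow_natCast (2:ℝ) 2
  push_cast at h
  rw [h]; norm_num

lemma quarter_eq : ((1:ℝ)/4) = (2:ℝ)^(-2:ℝ) := by
  rw [Real.rpow_neg (by norm_num), two_rpow_two]
  norm_num

lemma two_rpow_eq1 {α : ℝ} : ((1:ℝ)/4)^(α-1) = (2:ℝ)^(2-2*α) := by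
  rw [quarter_eq, ← Real.rpow_mul (by norm_num), show (-2:ℝ)*(α-1) = 2-2*α by ring]

lemma two_rpow_eq2 {α : ℝ} : ((1:ℝ)/4)^(α-2) = 8 * (2:ℝ)^(1-2*α) := by
  have e8 : (8:ℝ) = (2:ℝ)^(3:ℝ) := by
    have h := Real.rpow_natCast (2:ℝ) 3
    push_cast at h
    rw [h]; norm_num
  rw [quarter_eq, ← Real.rpow_mul (by norm_num), e8, ← Real.rpow_add (by norm_num),
    show (-2:ℝ)*(α-2) = 3+(1-2*α) by ring]

lemma beta_le {α : ℝ} (h1 : 1 < α) : Beta α α ≤ (2:ℝ)^(2-2*α) := by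
  have h1' : (0:ℝ) ≤ α - 1 := by linarith
  have hmono : ∀ u ∈ Set.Ioo (0:ℝ) 1, u^(α-1)*(1-u)^(α-1) ≤ ((1:ℝ)/4)^(α-1) := by
    intro u hu
    obtain ⟨hu0, hu1⟩ := hu
    rw [← Real.mul_rpow hu0.le (by linarith)]
    apply Real.rpow_le_rpow (by nlinarith) (by nlinarith [sq_nonneg (u-1/2)]) h1'
  have hle : Beta α α ≤ ∫ u in Set.Ioo (0:ℝ) 1, ((1:ℝ)/4)^(α-1) := by
    apply setIntegral_mono_on (beta_integrableOn h1)
      (integrableOn_const (by simp [Real.volume_Ioo])) measurableSet_Ioo hmono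
  rw [setIntegral_const, Real.volume_real_Ioo_of_le zero_le_one] at hle
  simp only [sub_zero, ENNReal.toReal_ofReal zero_le_one, one_smul] at hle
  rwa [two_rpow_eq1] at hle

lemma int_u_one_sub_u : ∫ u in Set.Ioo (0:ℝ) 1, u*(1-u) = 1/6 := by
  rw [← MeasureTheory.integral_Ioc_eq_integral_Ioo,
    ← intervalIntegral.integral_of_le (by norm_num : (0:ℝ) ≤ 1)]
  have : ∀ u : ℝ, u*(1-u) = u - u^2 := fun u => by ring
  rw [intervalIntegral.integral_congr (fun u _ => this u)]
  rw [intervalIntegral.integral_sub (intervalIntegral.intervalIntegrable_id)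
    (intervalIntegral.intervalIntegrable_pow 2)]
  rw [integral_id, integral_pow]
  norm_num

lemma beta_ge {α : ℝ} (h1 : 1 < α) (h2 : α ≤ 2) : (4:ℝ)/3 * (2:ℝ)^(1-2*α) ≤ Beta α α := by
  have hmono : ∀ u ∈ Set.Ioo (0:ℝ) 1, ((1:ℝ)/4)^(α-2) * (u*(1-u)) ≤ u^(α-1)*(1-u)^(α-1) := by
    intro u hu
    obtain ⟨hu0, hu1⟩ := hu
    have ht0 : 0 < u*(1-u) := by nlinarith
    rw [← Real.mul_rpow hu0.le (by linarith)]
    have e : (u*(1-u))^(α-1) = (u*(1-u))^(α-2) * (u*(1-u)) := by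
      rw [show α-1 = (α-2)+1 by ring, Real.rpow_add ht0, Real.rpow_one]
    rw [e]
    apply mul_le_mul_of_nonneg_right _ ht0.le
    exact Real.rpow_le_rpow_of_nonpos ht0 (by nlinarith [sq_nonneg (u-1/2)]) (by linarith)
  have hint2 : IntegrableOn (fun u : ℝ => ((1:ℝ)/4)^(α-2) * (u*(1-u))) (Set.Ioo (0:ℝ) 1) := by
    apply Integrable.const_mul
    exact ((continuous_id.mul (continuous_const.sub continuous_id)).integrableOn_Icc
      (a := 0) (b := 1)).mono_set Set.Ioo_subset_Icc_self
  have hle := setIntegral_mono_on hint2 (beta_integrableOn h1) measurableSet_Ioo hmono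
  rw [MeasureTheory.integral_const_mul, int_u_one_sub_u] at hle
  calc (4:ℝ)/3 * (2:ℝ)^(1-2*α) = ((1:ℝ)/4)^(α-2) * (1/6) := by rw [two_rpow_eq2]; ring
    _ ≤ Beta α α := hle

lemma convB {α : ℝ} (h1 : 1 < α) (m : ℕ) :
    ((m:ℝ)+1)^(2*α-1) * Beta α α ≤
      ∑ i ∈ Finset.range (m+1), ((i:ℝ)+1)^(α-1) * (((m-i : ℕ):ℝ)+1)^(α-1) := by
  have h1' : (0:ℝ) ≤ α - 1 := by linarith
  set M : ℝ := (m:ℝ)+1 with hM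
  have hMpos : (0:ℝ) < M := by positivity
  set f : ℝ → ℝ := fun x => x^(α-1)*(M-x)^(α-1) with hf
  have hcont : Continuous f := by
    exact (continuous_id.rpow_const (fun x => Or.inr h1')).mul
      ((continuous_const.sub continuous_id).rpow_const (fun x => Or.inr h1'))
  -- step 1 : ∫_0^M f = M^(2α-1) * Beta α α
  have step1 : ∫ x in (0:ℝ)..M, f x = M^(2*α-1) * Beta α α := by
    have hsub := intervalIntegral.integral_comp_mul_left (a := 0) (b := 1) f hMpos.ne'
    rw [mul_zero, mul_one] at hsub
    -- hsub : ∫ x in 0..1, f (M * x) = M⁻¹ • ∫ x in 0..M, f x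
    have hcongr : ∫ x in (0:ℝ)..1, f (M * x)
        = ∫ x in (0:ℝ)..1, M^(2*α-2) * (x^(α-1)*(1-x)^(α-1)) := by
      apply intervalIntegral.integral_congr
      intro x hx
      rw [Set.uIcc_of_le (by norm_num : (0:ℝ) ≤ 1)] at hx
      obtain ⟨hx0, hx1⟩ := hx
      simp only [hf]
      rw [show M - M*x = M*(1-x) by ring, Real.mul_rpow hMpos.le hx0,
        Real.mul_rpow hMpos.le (by linarith), show (2*α-2 : ℝ) = (α-1)+(α-1) by ring,
        Real.rpow_add hMpos]
      ring
    rw [hcongr, intervalIntegral.integral_const_mul] at hsub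
    have hBeta : ∫ x in (0:ℝ)..1, x^(α-1)*(1-x)^(α-1) = Beta α α := by
      rw [intervalIntegral.integral_of_le (by norm_num : (0:ℝ) ≤ 1),
        MeasureTheory.integral_Ioc_eq_integral_Ioo]
      rfl
    rw [hBeta] at hsub
    have : ∫ x in (0:ℝ)..M, f x = M * (M^(2*α-2) * Beta α α) := by
      rw [smul_eq_mul] at hsub
      field_simp at hsub
      rw [show (2*(α-1):ℝ) = 2*α-2 by ring] at hsub
      linarith
    rw [this, show (2*α-1 : ℝ) = 1+(2*α-2) by ring, Real.rpow_add hMpos, Real.rpow_one]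
    ring
  -- step 2 : decompose into unit intervals
  have step2 : ∫ x in (0:ℝ)..M, f x = ∑ i ∈ Finset.range (m+1), ∫ x in ((i:ℕ):ℝ)..((i+1:ℕ):ℝ), f x := by
    have := intervalIntegral.sum_integral_adjacent_intervals (a := fun i : ℕ => (i:ℝ)) (n := m+1)
      (f := f) (μ := volume) (fun k _ => hcont.intervalIntegrable _ _)
    rw [this]
    norm_num [hM]
  -- step 3 : bound each piece
  have step3 : ∀ i ∈ Finset.range (m+1),
      (∫ x in ((i:ℕ):ℝ)..((i+1:ℕ):ℝ), f x) ≤ ((i:ℝ)+1)^(α-1) * (((m-i : ℕ):ℝ)+1)^(α-1) := by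
    intro i hi
    have him := Finset.mem_range.1 hi
    have hcast : (((m-i : ℕ):ℝ)+1) = M - (i:ℝ) := by
      rw [hM, Nat.cast_sub (by omega)]
      ring
    rw [hcast]
    have hle : ((i:ℕ):ℝ) ≤ ((i+1:ℕ):ℝ) := by push_cast; linarith
    have hmono : ∀ x ∈ Set.Icc ((i:ℕ):ℝ) ((i+1:ℕ):ℝ), f x ≤ ((i:ℝ)+1)^(α-1) * (M-(i:ℝ))^(α-1) := by
      intro x hx
      obtain ⟨hxl, hxr⟩ := hx
      push_cast at hxl hxr
      have hx0 : (0:ℝ) ≤ x := le_trans (by positivity) hxl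
      have hiM : (i:ℝ)+1 ≤ M := by
        rw [hM]
        have : (i:ℝ) ≤ (m:ℝ) := by exact_mod_cast Nat.le_of_lt_succ him
        linarith
      apply mul_le_mul
      · exact Real.rpow_le_rpow hx0 hxr h1'
      · exact Real.rpow_le_rpow (by linarith) (by linarith) h1'
      · exact Real.rpow_nonneg (by linarith) _
      · positivity
    have := intervalIntegral.integral_mono_on hle (hcont.intervalIntegrable _ _)
      (intervalIntegrable_const (μ := volume)) hmono
    rw [intervalIntegral.integral_const, smul_eq_mul] at this
    refine this.trans (le_of_eq ?_)
    have : (((i+1:ℕ):ℝ) - ((i:ℕ):ℝ)) = 1 := by push_cast; ring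
    rw [this, one_mul]
  calc M^(2*α-1) * Beta α α = ∫ x in (0:ℝ)..M, f x := step1.symm
    _ = ∑ i ∈ Finset.range (m+1), ∫ x in ((i:ℕ):ℝ)..((i+1:ℕ):ℝ), f x := step2
    _ ≤ ∑ i ∈ Finset.range (m+1), ((i:ℝ)+1)^(α-1) * (((m-i : ℕ):ℝ)+1)^(α-1) :=
        Finset.sum_le_sum step3


lemma condB_step {α lam b1 : ℝ} (h1 : 1 < α) (h2 : α ≤ 2) (hlam : 0 < lam) (hb1 : 0 < b1)
    (hB : 0 < Beta α α) : ∀ m : ℕ,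
    (lam*b1*(Beta α α)*(2:ℝ)^(1-2*α)*(2*α)^(-α)) * ((m:ℝ)+2)^(α-1) ≤
      lam * b1 * (Real.Gamma (α*((2*m+2:ℕ):ℝ)+1)/Real.Gamma (α*((2*m+2:ℕ):ℝ)+α+1))
        * (((m:ℝ)+1)^(2*α-1) * Beta α α) := by
  intro m
  have hα0 : (0:ℝ) < α := by linarith
  set x : ℝ := α*((2*m+2:ℕ):ℝ) with hx
  have hxnn : (0:ℝ) ≤ x := by positivity
  have hgl := g_lower hα0 hxnn (gamma_ratio_B hα0 h2 hxnn)
    (Real.rpow_pos_of_pos (by linarith) α)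
  -- (x+2)^α ≤ (2α)^α (m+2)^α
  have hx2 : x + 2 ≤ (2*α)*((m:ℝ)+2) := by
    rw [hx]; push_cast; nlinarith
  have hx2pos : (0:ℝ) < x+2 := by linarith
  have hrpow : (x+2)^α ≤ (2*α)^α * ((m:ℝ)+2)^α := by
    rw [← Real.mul_rpow (by positivity) (by positivity)]
    exact Real.rpow_le_rpow hx2pos.le hx2 hα0.le
  -- core : Bα 2^{1-2α}(2α)^{-α}(m+2)^{α-1} (x+2)^α ≤ (m+1)^{2α-1} Bα
  have hm2 : (0:ℝ) < (m:ℝ)+2 := by positivity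
  have hm1 : (0:ℝ) < (m:ℝ)+1 := by positivity
  have h2a : (0:ℝ) < (2*α)^α := Real.rpow_pos_of_pos (by linarith) α
  have hinv : (2*α)^(-α) * (2*α)^α = 1 := by
    rw [← Real.rpow_add (by linarith)]; norm_num
  have hkey : (2:ℝ)^(1-2*α) * (((m:ℝ)+2)^(α-1) * ((m:ℝ)+2)^α) ≤ ((m:ℝ)+1)^(2*α-1) := by
    rw [← Real.rpow_add hm2, show α-1+α = 2*α-1 by ring]
    have e : (2:ℝ)^(1-2*α) = (2⁻¹ : ℝ)^(2*α-1) := by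
      rw [Real.inv_rpow (by norm_num), ← Real.rpow_neg (by norm_num),
        show -(2*α-1) = 1-2*α by ring]
    rw [e, ← Real.mul_rpow (by norm_num) hm2.le]
    exact Real.rpow_le_rpow (by positivity) (by linarith) (by linarith)
  -- assemble
  have hglb : 1/(x+2)^α ≤ Real.Gamma (x+1)/Real.Gamma (x+α+1) := hgl
  have hxapos : (0:ℝ) < (x+2)^α := Real.rpow_pos_of_pos hx2pos α
  calc (lam*b1*(Beta α α)*(2:ℝ)^(1-2*α)*(2*α)^(-α)) * ((m:ℝ)+2)^(α-1)
      ≤ lam * b1 * (1/(x+2)^α) * (((m:ℝ)+1)^(2*α-1) * Beta α α) := by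
        rw [div_eq_mul_inv, one_mul]
        rw [show lam*b1*(Beta α α)*(2:ℝ)^(1-2*α)*(2*α)^(-α) * ((m:ℝ)+2)^(α-1)
          = lam*b1*(Beta α α) * ((2:ℝ)^(1-2*α)*(2*α)^(-α)*((m:ℝ)+2)^(α-1)) by ring,
          show lam*b1*((x+2)^α)⁻¹*(((m:ℝ)+1)^(2*α-1) * Beta α α)
          = lam*b1*(Beta α α) * (((m:ℝ)+1)^(2*α-1) * ((x+2)^α)⁻¹) by ring]
        apply mul_le_mul_of_nonneg_left _ (by positivity)
        have step : (2:ℝ)^(1-2*α)*(2*α)^(-α)*((m:ℝ)+2)^(α-1) * (x+2)^α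
            ≤ ((m:ℝ)+1)^(2*α-1) := by
          calc (2:ℝ)^(1-2*α)*(2*α)^(-α)*((m:ℝ)+2)^(α-1) * (x+2)^α
              ≤ (2:ℝ)^(1-2*α)*(2*α)^(-α)*((m:ℝ)+2)^(α-1) * ((2*α)^α * ((m:ℝ)+2)^α) := by
                apply mul_le_mul_of_nonneg_left hrpow
                have : (0:ℝ) < (2*α)^(-α) := Real.rpow_pos_of_pos (by linarith) _
                positivity
            _ = ((2*α)^(-α) * (2*α)^α) * ((2:ℝ)^(1-2*α) * (((m:ℝ)+2)^(α-1) * ((m:ℝ)+2)^α)) := by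
                ring
            _ = (2:ℝ)^(1-2*α) * (((m:ℝ)+2)^(α-1) * ((m:ℝ)+2)^α) := by rw [hinv, one_mul]
            _ ≤ ((m:ℝ)+1)^(2*α-1) := hkey
        -- from step conclude the inverse form
        rw [← div_eq_mul_inv, le_div_iff₀ hxapos]
        exact step
    _ ≤ lam * b1 * (Real.Gamma (x+1)/Real.Gamma (x+α+1)) * (((m:ℝ)+1)^(2*α-1) * Beta α α) := by
        apply mul_le_mul_of_nonneg_right _ (by positivity)
        apply mul_le_mul_of_nonneg_left hglb (by positivity)


lemma finalA {α lam nu : ℝ} (h0 : 0 < α) (hlam : 0 < lam) (hnu : 0 < nu) :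
    (1/(lam*(nu/Real.Gamma (α+1))*((5:ℝ)^(1-α)/(3*α^α))))^(1/(2*α)) =
    ((3*(5:ℝ)^(α-1))^(1/(2*α)) * Real.sqrt α) * (Real.Gamma (α+1)/(lam*nu))^(1/(2*α))  := by
  have hΓ : 0 < Real.Gamma (α+1) := Real.Gamma_pos_of_pos (by linarith)
  have h5a : (0:ℝ) < (5:ℝ)^(1-α) := Real.rpow_pos_of_pos (by norm_num) _
  have h5b : (0:ℝ) < (5:ℝ)^(α-1) := Real.rpow_pos_of_pos (by norm_num) _
  have hαα : (0:ℝ) < α^α := Real.rpow_pos_of_pos h0 _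
  have e5 : (5:ℝ)^(α-1) = ((5:ℝ)^(1-α))⁻¹ := by
    rw [← Real.rpow_neg (by norm_num), show -(1-α) = α-1 by ring]
  have e1 : 1/(lam*(nu/Real.Gamma (α+1))*((5:ℝ)^(1-α)/(3*α^α)))
      = (Real.Gamma (α+1)/(lam*nu)) * ((3*(5:ℝ)^(α-1)) * α^α) := by
    rw [e5]; field_simp; try ring
  rw [e1, Real.mul_rpow (by positivity) (by positivity),
    Real.mul_rpow (by positivity) (by positivity)]
  have e2 : (α^α)^(1/(2*α)) = Real.sqrt α := by
    rw [← Real.rpow_mul h0.le, show α*(1/(2*α)) = 1/2 by field_simp,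
      Real.sqrt_eq_rpow]
  rw [e2]
  ring

lemma finalB {α lam nu : ℝ} (h1 : 1 < α) (h2 : α ≤ 2) (hlam : 0 < lam) (hnu : 0 < nu) :
    (1/(lam*(nu/Real.Gamma (α+1))*(Beta α α)*((2:ℝ)^(1-2*α))*(2*α)^(-α)))^(1/(2*α)) ≤
    (Real.sqrt (2*α) / (Beta α α - (2:ℝ)^(1-2*α))) * (Real.Gamma (α+1)/(lam*nu))^(1/(2*α)) := by
  have h0 : (0:ℝ) < α := by linarith
  have hΓ : 0 < Real.Gamma (α+1) := Real.Gamma_pos_of_pos (by linarith)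
  set c' : ℝ := (2:ℝ)^(1-2*α) with hc'
  have hc'pos : (0:ℝ) < c' := Real.rpow_pos_of_pos (by norm_num) _
  have hge := beta_ge h1 h2
  have hle := beta_le h1
  have h2c : (2:ℝ)^(2-2*α) = 2*c' := by
    rw [hc', show (2-2*α : ℝ) = 1+(1-2*α) by ring, Real.rpow_add (by norm_num), Real.rpow_one]
  rw [h2c] at hle
  have hBpos : 0 < Beta α α := lt_of_lt_of_le (by positivity) hge
  have hdiff : 0 < Beta α α - c' := by nlinarith
  have hdle : Beta α α - c' ≤ c' := by nlinarith
  have hc'half : c' ≤ 1/2 := by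
    have h : (2:ℝ)^(1-2*α) ≤ (2:ℝ)^(-1:ℝ) :=
      Real.rpow_le_rpow_of_exponent_le (by norm_num) (by linarith)
    rw [Real.rpow_neg_one] at h
    rw [hc']
    linarith [h]
  -- key : (B-c')^(2α) ≤ B c'
  have hkey : (Beta α α - c')^(2*α) ≤ Beta α α * c' := by
    have s1 : (Beta α α - c')^(2*α) ≤ (Beta α α - c')^(2:ℝ) :=
      Real.rpow_le_rpow_of_exponent_ge hdiff (by linarith) (by linarith)
    have s2 : (Beta α α - c')^(2:ℝ) = (Beta α α - c')^(2:ℕ) := by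
      rw [← Real.rpow_natCast (Beta α α - c') 2]; norm_num
    rw [s2] at s1
    have s3 : (Beta α α - c')^(2:ℕ) ≤ Beta α α * c' := by
      have := sq_nonneg (Beta α α - c')
      nlinarith
    linarith
  -- (1/(B c'))^{1/(2α)} ≤ 1/(B-c')
  have hBc : (0:ℝ) < Beta α α * c' := by positivity
  have hmain : ((Beta α α * c')⁻¹)^(1/(2*α)) ≤ 1/(Beta α α - c') := by
    have m1 : Beta α α - c' ≤ (Beta α α * c')^(1/(2*α)) := by
      calc Beta α α - c' = ((Beta α α - c')^(2*α))^(1/(2*α)) := by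
            rw [← Real.rpow_mul hdiff.le, show (2*α)*(1/(2*α)) = 1 by field_simp,
              Real.rpow_one]
        _ ≤ (Beta α α * c')^(1/(2*α)) :=
            Real.rpow_le_rpow (by positivity) hkey (by positivity)
    rw [Real.inv_rpow hBc.le]
    exact le_trans (inv_anti₀ hdiff m1) (le_of_eq (one_div _).symm)
  -- assemble
  have e1 : 1/(lam*(nu/Real.Gamma (α+1))*(Beta α α)*c'*(2*α)^(-α))
      = (Real.Gamma (α+1)/(lam*nu)) * ((Beta α α * c')⁻¹ * (2*α)^α) := by
    have e0 : (2*α)^(-α:ℝ) = ((2*α)^α)⁻¹ := Real.rpow_neg (by linarith) α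
    have h2a : (0:ℝ) < (2*α)^α := Real.rpow_pos_of_pos (by linarith) α
    rw [e0]
    field_simp
  rw [e1, Real.mul_rpow (by positivity) (by positivity),
    Real.mul_rpow (by positivity) (by positivity)]
  have e2 : ((2*α)^α)^(1/(2*α)) = Real.sqrt (2*α) := by
    rw [← Real.rpow_mul (by linarith), show α*(1/(2*α)) = 1/2 by field_simp,
      Real.sqrt_eq_rpow]
  rw [e2]
  have hXr : (0:ℝ) ≤ (Real.Gamma (α+1)/(lam*nu))^(1/(2*α)) := by positivity
  have hs : (0:ℝ) ≤ Real.sqrt (2*α) := Real.sqrt_nonneg _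
  calc (Real.Gamma (α+1)/(lam*nu))^(1/(2*α)) * (((Beta α α * c')⁻¹)^(1/(2*α)) * Real.sqrt (2*α))
      ≤ (Real.Gamma (α+1)/(lam*nu))^(1/(2*α)) * ((1/(Beta α α - c')) * Real.sqrt (2*α)) := by
        apply mul_le_mul_of_nonneg_left _ hXr
        exact mul_le_mul_of_nonneg_right hmain hs
    _ = (Real.sqrt (2*α) / (Beta α α - c')) * (Real.Gamma (α+1)/(lam*nu))^(1/(2*α)) := by
        ring

end AuxLemmas

lemma riccati_compare {α lam mu nu : ℝ} (hα : 0 < α) (hlam : 0 ≤ lam) (hmu : 0 ≤ mu)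
    (hnu : 0 ≤ nu) {a a0 : ℕ → ℂ}
    (ha : IsRiccatiSeq α lam mu nu a) (ha0 : IsRiccatiSeq α lam 0 nu a0) :
    ∀ k, ‖a0 k‖ ≤ ‖a k‖ := by
  have ha0' : IsRiccatiSeq α (lam:ℝ) ((0:ℝ):ℂ) (nu:ℝ) a0 := by simpa using ha0
  have hA := riccati_norm_rec hα hlam hmu hnu ha
  have hA0 := riccati_norm_rec hα hlam le_rfl hnu ha0'
  intro k
  induction k using Nat.strong_induction_on with
  | _ k IH =>
    match k with
    | 0 => rw [ha.1, ha0.1]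
    | 1 => rw [hA.1, hA0.1]
    | (k+2) =>
      have h1 := hA.2 (k+1) (by omega)
      have h0 := hA0.2 (k+1) (by omega)
      rw [h1, h0]
      have hg : 0 ≤ Real.Gamma (α*((k+1:ℕ):ℝ)+1)/Real.Gamma (α*((k+1:ℕ):ℝ)+α+1) := by
        have g1 : 0 < Real.Gamma (α*((k+1:ℕ):ℝ)+1) := Real.Gamma_pos_of_pos (by positivity)
        have g2 : 0 < Real.Gamma (α*((k+1:ℕ):ℝ)+α+1) := Real.Gamma_pos_of_pos (by positivity)
        positivity
      apply mul_le_mul_of_nonneg_right _ hg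
      have hsum : (∑ j ∈ Finset.Ico 1 (k+1), ‖a0 j‖ * ‖a0 (k+1-j)‖)
          ≤ ∑ j ∈ Finset.Ico 1 (k+1), ‖a j‖ * ‖a (k+1-j)‖ := by
        apply Finset.sum_le_sum
        intro j hj
        exact mul_le_mul (IH j (by obtain ⟨h,h2⟩ := Finset.mem_Ico.1 hj; omega))
          (IH (k+1-j) (by obtain ⟨h,h2⟩ := Finset.mem_Ico.1 hj; omega))
          (norm_nonneg _) (norm_nonneg _)
      have hmr : 0 ≤ mu * ‖a (k+1)‖ := mul_nonneg hmu (norm_nonneg _)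
      have := mul_le_mul_of_nonneg_left hsum hlam
      linarith

theorem stmt_2 (α : ℝ) (hα : 0 < α) (hα2 : α ≤ 2)
    (lam mu nu : ℝ) (hlam : 0 < lam) (hnu : 0 < nu) (hmu : 0 ≤ mu)
    (a a0 : ℕ → ℂ)
    (ha : IsRiccatiSeq α (lam : ℂ) (mu : ℂ) (nu : ℂ) a)
    (ha0 : IsRiccatiSeq α (lam : ℂ) 0 (nu : ℂ) a0)
    (Cα : ℝ)
    (hCα : Cα = if α ≤ 1 then (3 * (5:ℝ) ^ (α - 1)) ^ (1/(2*α)) * Real.sqrt α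
      else Real.sqrt (2*α) / (Beta α α - (2:ℝ) ^ (1 - 2*α))) :
    radius α a ≤ radius α a0 ∧
      radius α a0 ≤ ENNReal.ofReal (Cα * (Real.Gamma (α + 1) / (lam * nu)) ^ (1/(2*α))) := by
  have hΓ1 : 0 < Real.Gamma (α+1) := Real.Gamma_pos_of_pos (by linarith)
  have ha0' : IsRiccatiSeq α ((lam:ℝ):ℂ) (((0:ℝ)):ℂ) ((nu:ℝ):ℂ) a0 := by simpa using ha0
  have hA0 := riccati_norm_rec hα hlam.le le_rfl hnu.le ha0'
  have hnn : ∀ k, 0 ≤ ‖a0 k‖ := fun k => norm_nonneg _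
  have hr1 : ‖a0 1‖ = nu/Real.Gamma (α+1) := hA0.1
  have hrec0 : ∀ k : ℕ, 1 ≤ k → ‖a0 (k+1)‖ =
      lam * (∑ j ∈ Finset.Ico 1 k, ‖a0 j‖ * ‖a0 (k-j)‖) *
        (Real.Gamma (α*(k:ℝ)+1)/Real.Gamma (α*(k:ℝ)+α+1)) := by
    intro k hk
    have h := hA0.2 k hk
    rw [zero_mul, add_zero] at h
    exact h
  have hb1 : 0 < nu/Real.Gamma (α+1) := by positivity
  constructor
  · exact radius_mono (riccati_compare hα hlam.le hmu hnu.le ha ha0)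
  · by_cases hα1 : α ≤ 1
    · -- branch α ≤ 1
      rw [hCα, if_pos hα1]
      have hcpos : 0 < (5:ℝ)^(1-α)/(3*α^α) := by
        have p1 := Real.rpow_pos_of_pos (show (0:ℝ)<5 by norm_num) (1-α)
        have p2 := Real.rpow_pos_of_pos hα α
        positivity
      have hκpos : 0 < min 1 ((3/5)*(5*α/(2*α+1))^α) := by
        apply lt_min (by norm_num)
        have := Real.rpow_pos_of_pos (show (0:ℝ) < 5*α/(2*α+1) by positivity) α
        positivity
      have hκ1 : min 1 ((3/5)*(5*α/(2*α+1))^α) ≤ 1 := min_le_left _ _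
      have hlow := lower_bound_geo hα hlam hb1 hcpos hκpos hκ1
        (condA_base hα hα1) (condA_step hα hα1) hnn hr1 hrec0
      refine radius_le_of_lower hα a0
        (min 1 ((3/5)*(5*α/(2*α+1))^α) * (nu/Real.Gamma (α+1)))
        (lam*(nu/Real.Gamma (α+1))*((5:ℝ)^(1-α)/(3*α^α)))
        _ (by positivity) (by positivity) (fun m => hlow m) (by positivity) ?_
      exact le_of_eq (finalA hα hlam hnu)
    · -- branch 1 < α ≤ 2
      rw [hCα, if_neg hα1]
      have h1 : 1 < α := lt_of_not_ge hα1
      have hc'pos : (0:ℝ) < (2:ℝ)^(1-2*α) := Real.rpow_pos_of_pos (by norm_num) _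
      have hBpos : 0 < Beta α α := lt_of_lt_of_le (by positivity) (beta_ge h1 hα2)
      have hqpos : 0 < lam*(nu/Real.Gamma (α+1))*(Beta α α)*((2:ℝ)^(1-2*α))*(2*α)^(-α) := by
        have := Real.rpow_pos_of_pos (show (0:ℝ) < 2*α by linarith) (-α)
        positivity
      have hlow := lower_bound_weighted h1 hlam hb1 hqpos hBpos
        (fun m => convB h1 m) (fun m => condB_step h1 hα2 hlam hb1 hBpos m) hnn hr1 hrec0
      have hlow' : ∀ m : ℕ, (nu/Real.Gamma (α+1)) *
          (lam*(nu/Real.Gamma (α+1))*(Beta α α)*((2:ℝ)^(1-2*α))*(2*α)^(-α))^m ≤ ‖a0 (2*m+1)‖ := by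
        intro m
        refine le_trans ?_ (hlow m)
        have h1m : (1:ℝ) ≤ ((m:ℝ)+1)^(α-1) :=
          Real.one_le_rpow (by push_cast; linarith [Nat.cast_nonneg (α := ℝ) m]) (by linarith)
        nlinarith [pow_pos hqpos m, mul_pos hb1 (pow_pos hqpos m)]
      have hdiff : 0 < Beta α α - (2:ℝ)^(1-2*α) := by
        have := beta_ge h1 hα2
        nlinarith
      refine radius_le_of_lower hα a0 (nu/Real.Gamma (α+1))
        (lam*(nu/Real.Gamma (α+1))*(Beta α α)*((2:ℝ)^(1-2*α))*(2*α)^(-α))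
        _ (by positivity) hqpos hlow' ?_ ?_
      · positivity
      · exact finalB h1 hα2 hlam hnu
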